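/- (Hoffman's chromatic bound) Let G be a graph with at least one edge, A its adjacency matrix, μ(A) its largest eigenvalue and μ_min(A) its smallest eigenvalue. Then χ(G) ≥ 1 + μ(A)/(−μ_min(A)). -/

import Mathlib

open Matrix SimpleGraph

noncomputable def maxEigR {n : ℕ} (A : Matrix (Fin n) (Fin n) ℝ) : ℝ :=
  sSup (spectrum ℝ A)

noncomputable def minEigR {n : ℕ} (A : Matrix (Fin n) (Fin n) ℝ) : ℝ :=
  sInf (spectrum ℝ A)

lemma rayleigh_min {n : ℕ} (A : Matrix (Fin n) (Fin n) ℝ) (hA : A.IsHermitian)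
    (z : Fin n → ℝ) : minEigR A * (z ⬝ᵥ z) ≤ z ⬝ᵥ (A *ᵥ z) := by
  set U : Matrix (Fin n) (Fin n) ℝ := (hA.eigenvectorUnitary : Matrix (Fin n) (Fin n) ℝ) with hU
  set w : Fin n → ℝ := star U *ᵥ z with hw
  have hvm : ∀ y : Fin n → ℝ, z ⬝ᵥ (U *ᵥ y) = w ⬝ᵥ y := by
    intro y
    rw [dotProduct_mulVec, hw]
    congr 1
    ext i
    simp [vecMul, mulVec, dotProduct, Matrix.star_apply, mul_comm]
  have hAz : z ⬝ᵥ (A *ᵥ z) = ∑ i, hA.eigenvalues i * (w i * w i) := by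
    conv_lhs => rw [hA.spectral_theorem, Unitary.conjStarAlgAut_apply]
    rw [← mulVec_mulVec, ← mulVec_mulVec, hvm, hw]
    simp [mulVec_diagonal, dotProduct, Function.comp]
    exact Finset.sum_congr rfl fun i _ => by ring
  have hzz : z ⬝ᵥ z = ∑ i, w i * w i := by
    have h1 : w ⬝ᵥ w = z ⬝ᵥ ((U * star U) *ᵥ z) := by
      rw [← mulVec_mulVec, hvm]
    rw [show (U * star U) = 1 from ?_, one_mulVec] at h1
    · rw [← h1]; rfl
    · exact Unitary.coe_mul_star_self hA.eigenvectorUnitary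
  have hmin : ∀ i, minEigR A ≤ hA.eigenvalues i := by
    intro i
    refine csInf_le ?_ (hA.eigenvalues_mem_spectrum_real i)
    exact (A.finite_real_spectrum).bddBelow
  rw [hAz, hzz, Finset.mul_sum]
  refine Finset.sum_le_sum fun i _ => ?_
  exact mul_le_mul_of_nonneg_right (hmin i) (mul_self_nonneg _)

lemma symm_dot {n : ℕ} (A : Matrix (Fin n) (Fin n) ℝ) (hA : A.IsHermitian)
    (v w : Fin n → ℝ) : v ⬝ᵥ (A *ᵥ w) = w ⬝ᵥ (A *ᵥ v) := by
  have hT : Aᵀ = A := by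
    ext i j
    have := congrFun (congrFun hA i) j
    simpa [conjTranspose_apply] using this
  have h1 : v ᵥ* A = A *ᵥ v := by
    conv_lhs => rw [← hT]
    rw [vecMul_transpose]
  rw [dotProduct_mulVec, h1, dotProduct_comm]

/-- Hoffman's bound: `χ(G) ≥ 1 + μ(A)/(−μ_min(A))` for a graph with an edge,
stated via `k`-colorability for every `k`. -/
theorem stmt6 {n : ℕ} (G : SimpleGraph (Fin n)) [DecidableRel G.Adj]
    (hedge : ∃ u v, G.Adj u v) :
    ∀ k : ℕ, G.Colorable k →
      (k : ℝ) ≥ 1 + maxEigR (G.adjMatrix ℝ) / (- minEigR (G.adjMatrix ℝ)) := by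
  obtain ⟨u0, v0, huv⟩ := hedge
  set A : Matrix (Fin n) (Fin n) ℝ := G.adjMatrix ℝ with hAdef
  have hA : A.IsHermitian := by
    rw [Matrix.IsHermitian]
    ext i j
    simp [hAdef, conjTranspose_apply, G.adj_comm i j]
  set m : ℝ := minEigR A with hm
  set μ : ℝ := maxEigR A with hμ
  -- m < 0
  have hmneg : m ≤ -1 := by
    have hr := rayleigh_min A hA (Pi.single u0 1 - Pi.single v0 1)
    have hne : u0 ≠ v0 := G.ne_of_adj huv
    have e1 : (Pi.single u0 1 - Pi.single v0 1 : Fin n → ℝ) ⬝ᵥ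
        (Pi.single u0 1 - Pi.single v0 1) = 2 := by
      simp [sub_dotProduct, dotProduct_sub, dotProduct_single, single_dotProduct,
        Pi.single_apply, hne, hne.symm]
      norm_num
    have e2 : (Pi.single u0 1 - Pi.single v0 1 : Fin n → ℝ) ⬝ᵥ
        (A *ᵥ (Pi.single u0 1 - Pi.single v0 1)) = -2 := by
      have hAuv : A u0 v0 = 1 := by simp [hAdef, huv]
      have hAvu : A v0 u0 = 1 := by simp [hAdef, huv.symm]
      have hAuu : A u0 u0 = 0 := by simp [hAdef]
      have hAvv : A v0 v0 = 0 := by simp [hAdef]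
      simp [mulVec_sub, dotProduct_sub, sub_dotProduct, single_dotProduct,
        Matrix.mulVec_single, hAuv, hAvu, hAuu, hAvv]
      ring
    rw [e1, e2] at hr
    linarith
  have hmlt : m < 0 := by linarith
  -- eigenvector for μ
  have hnemp : Nonempty (Fin n) := ⟨u0⟩
  have hspec : spectrum ℝ A = Set.range hA.eigenvalues := hA.spectrum_real_eq_range_eigenvalues
  have hμmem : μ ∈ spectrum ℝ A := by
    refine Set.Nonempty.csSup_mem ?_ A.finite_real_spectrum
    rw [hspec]
    exact Set.range_nonempty _
  rw [hspec] at hμmem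
  obtain ⟨j, hj⟩ := hμmem
  set x : Fin n → ℝ := ⇑(hA.eigenvectorBasis j) with hx
  have hAx : A *ᵥ x = μ • x := by rw [← hj]; exact hA.mulVec_eigenvectorBasis j
  have hx1 : x ⬝ᵥ x = 1 := by
    have h2 : (inner ℝ (hA.eigenvectorBasis j) (hA.eigenvectorBasis j) : ℝ) = 1 := by
      simpa using orthonormal_iff_ite.mp hA.eigenvectorBasis.orthonormal j j
    rw [PiLp.inner_apply] at h2
    simpa [PiLp.inner_apply, dotProduct, RCLike.inner_apply, hx, sq] using h2
  intro k hcol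
  obtain ⟨C⟩ := hcol
  rcases Nat.eq_zero_or_pos k with hk | hk
  · subst hk; exact (C u0).elim0
  -- color classes
  set xi : Fin k → Fin n → ℝ := fun i v => if C v = i then x v else 0 with hxi
  set a : Fin k → ℝ := fun i => xi i ⬝ᵥ xi i with ha
  have ha_sum : ∑ i, a i = 1 := by
    rw [← hx1, dotProduct]
    calc ∑ i, a i = ∑ i, ∑ v, xi i v * xi i v := rfl
      _ = ∑ v, ∑ i, xi i v * xi i v := Finset.sum_comm
      _ = ∑ v, x v * x v := by
          refine Finset.sum_congr rfl fun v _ => ?_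
          have hterm : ∀ i : Fin k, xi i v * xi i v = if C v = i then x v * x v else 0 := by
            intro i; simp only [hxi]; split <;> simp
          simp [hterm]
  have hxi_x : ∀ i, xi i ⬝ᵥ x = a i := by
    intro i
    simp only [ha, dotProduct]
    refine Finset.sum_congr rfl fun v _ => ?_
    simp only [hxi]; split <;> simp
  have hindep : ∀ i, xi i ⬝ᵥ (A *ᵥ xi i) = 0 := by
    intro i
    rw [dotProduct]
    refine Finset.sum_eq_zero fun u _ => ?_
    rw [mulVec, dotProduct, Finset.mul_sum]
    refine Finset.sum_eq_zero fun v _ => ?_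
    by_cases hadj : G.Adj u v
    · have hne : C u ≠ C v := C.valid hadj
      by_cases hu : C u = i
      · have hv : C v ≠ i := fun h => hne (hu.trans h.symm)
        simp [hxi, hv]
      · simp [hxi, hu]
    · have : A u v = 0 := by simp [hAdef, hadj]
      simp [this]
  have hAxi : ∀ i, xi i ⬝ᵥ (A *ᵥ x) = μ * a i := by
    intro i
    rw [hAx, dotProduct_smul, smul_eq_mul, hxi_x]
  -- Rayleigh applied to z i = x - k • xi i
  have key : ∀ i : Fin k, m * (1 - 2*(k:ℝ)*a i + (k:ℝ)^2 * a i) ≤ μ * (1 - 2*(k:ℝ)*a i) := by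
    intro i
    have hr := rayleigh_min A hA (x - (k:ℝ) • xi i)
    have e1 : (x - (k:ℝ) • xi i) ⬝ᵥ (x - (k:ℝ) • xi i) = 1 - 2*(k:ℝ)*a i + (k:ℝ)^2 * a i := by
      rw [dotProduct_sub, sub_dotProduct, sub_dotProduct, dotProduct_smul, dotProduct_smul,
        smul_dotProduct, smul_dotProduct, hx1, hxi_x, dotProduct_comm x (xi i), hxi_x]
      simp only [smul_eq_mul, ha]
      ring
    have e2 : (x - (k:ℝ) • xi i) ⬝ᵥ (A *ᵥ (x - (k:ℝ) • xi i)) = μ * (1 - 2*(k:ℝ)*a i) := by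
      rw [mulVec_sub, mulVec_smul, dotProduct_sub, sub_dotProduct, sub_dotProduct,
        dotProduct_smul, dotProduct_smul, smul_dotProduct, smul_dotProduct]
      rw [symm_dot A hA x (xi i)]
      simp only [smul_eq_mul]
      rw [hAxi, hindep]
      have hxAx : x ⬝ᵥ (A *ᵥ x) = μ := by rw [hAx, dotProduct_smul, smul_eq_mul, hx1, mul_one]
      rw [hxAx]
      ring
    rw [e1, e2] at hr
    exact hr
  have hsum := Finset.sum_le_sum fun i (_ : i ∈ Finset.univ) => key i
  have L : ∑ i : Fin k, m * (1 - 2*(k:ℝ)*a i + (k:ℝ)^2 * a i) = m * ((k:ℝ)^2 - (k:ℝ)) := by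
    rw [← Finset.mul_sum]
    congr 1
    rw [Finset.sum_add_distrib, Finset.sum_sub_distrib, ← Finset.mul_sum, ← Finset.mul_sum, ha_sum]
    simp
    ring
  have R : ∑ i : Fin k, μ * (1 - 2*(k:ℝ)*a i) = -((k:ℝ) * μ) := by
    rw [← Finset.mul_sum, Finset.sum_sub_distrib, ← Finset.mul_sum, ha_sum]
    simp
    ring
  rw [L, R] at hsum
  -- conclude
  have hk0 : (0:ℝ) < (k:ℝ) := by exact_mod_cast hk
  have h3 : m * ((k:ℝ) - 1) ≤ -μ := by nlinarith
  have h4 : μ / (-m) ≤ (k:ℝ) - 1 := by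
    rw [div_le_iff₀ (by linarith : (0:ℝ) < -m)]
    nlinarith
  linarith
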